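/- Let n be a positive even integer, z ∈ I^FPF_n, and i ∈ [n−1]. Then: ℓ_fpf(s_i z s_i) = ℓ_fpf(z) + 1 if z(i) < z(i+1); ℓ_fpf(s_i z s_i) = ℓ_fpf(z) if z(i) = i+1 and z(i+1) = i; and ℓ_fpf(s_i z s_i) = ℓ_fpf(z) − 1 if i+1 ≠ z(i) > z(i+1) ≠ i. -/

import Mathlib

open MvPolynomial

noncomputable section

/-- The coefficient ring `ℤ[β]`. -/
abbrev Rb : Type := Polynomial ℤ

/-- The indeterminate `β`. -/
def bb : Rb := Polynomial.X

/-- The order-reversing permutation `n⋯321`, i.e. `i ↦ n+1-i` in 1-indexed notation. -/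
def revPerm (n : ℕ) : Equiv.Perm (Fin n) :=
  ⟨Fin.rev, Fin.rev, fun i => Fin.rev_rev i, fun i => Fin.rev_rev i⟩

/-- `z` is a fixed-point-free involution. -/
def IsFPF {n : ℕ} (z : Equiv.Perm (Fin n)) : Prop :=
  z * z = 1 ∧ ∀ i, z i ≠ i

/-- `x_i + x_j + β x_i x_j`. -/
def oplus {n : ℕ} (i j : Fin n) : MvPolynomial (Fin n) Rb :=
  X i + X j + C bb * (X i * X j)

/-- `IsDivDiffB i j f g` encodes `∂_i^{(β)} f = g` where `j = i+1`:
`∂_i^{(β)} f = ((1+βx_j) f - s_i((1+βx_j) f)) / (x_i - x_j)`, stated multiplicatively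
(the quotient is exact, and `g` is uniquely determined since the ring is a domain). -/
def IsDivDiffB {n : ℕ} (i j : Fin n) (f g : MvPolynomial (Fin n) Rb) : Prop :=
  (X i - X j) * g =
    (1 + C bb * X j) * f - rename ⇑(Equiv.swap i j) ((1 + C bb * X j) * f)

/-- `∏_{1 ≤ i < j ≤ n-i} (x_i + x_j + β x_i x_j)` (variables 0-indexed). -/
def spTop (n : ℕ) : MvPolynomial (Fin n) Rb :=
  ∏ p ∈ Finset.univ.filter
      (fun p : Fin n × Fin n => p.1 < p.2 ∧ (p.1 : ℕ) + (p.2 : ℕ) + 2 ≤ n),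
    oplus p.1 p.2

/-- `x_1^{n-1} x_2^{n-2} ⋯ x_{n-1}^1` (variables 0-indexed). -/
def grTop (n : ℕ) : MvPolynomial (Fin n) Rb :=
  ∏ a : Fin n, X a ^ (n - 1 - (a : ℕ))

/-- The defining property of the family of symplectic Grothendieck polynomials. -/
def IsSpFam (n : ℕ) (G : Equiv.Perm (Fin n) → MvPolynomial (Fin n) Rb) : Prop :=
  G (revPerm n) = spTop n ∧
    ∀ z : Equiv.Perm (Fin n), IsFPF z →
      ∀ i j : Fin n, (j : ℕ) = (i : ℕ) + 1 →
        z i ≠ j → z j ≠ i → z j < z i →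
          IsDivDiffB i j (G z) (G (Equiv.swap i j * z * Equiv.swap i j))

/-- The defining property of the family of Grothendieck polynomials. -/
def IsGrothFam (n : ℕ) (G : Equiv.Perm (Fin n) → MvPolynomial (Fin n) Rb) : Prop :=
  G (revPerm n) = grTop n ∧
    ∀ (w : Equiv.Perm (Fin n)) (i j : Fin n), (j : ℕ) = (i : ℕ) + 1 →
      w j < w i → IsDivDiffB i j (G w) (G (w * Equiv.swap i j))

/-- The length (number of inversions) of a permutation. -/
def invLen {n : ℕ} (w : Equiv.Perm (Fin n)) : ℕ :=
  (Finset.univ.filter (fun p : Fin n × Fin n => p.1 < p.2 ∧ w p.2 < w p.1)).card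

/-- The fixed-point-free involution length `ℓ_fpf(z) = #{(i,j) : z(i) > z(j) < i < j}`. -/
def fpfLen {n : ℕ} (z : Equiv.Perm (Fin n)) : ℕ :=
  (Finset.univ.filter
      (fun p : Fin n × Fin n => z p.2 < z p.1 ∧ z p.2 < p.1 ∧ p.1 < p.2)).card

/-- The underlying function of `Θ = (1,2)(3,4)⋯(n-1,n)`. -/
def thetaFun (n : ℕ) (hn : n % 2 = 0) (i : Fin n) : Fin n :=
  ⟨if (i : ℕ) % 2 = 0 then (i : ℕ) + 1 else (i : ℕ) - 1, by
    have hi := i.isLt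
    split_ifs with h <;> omega⟩

/-- The fixed-point-free involution `Θ = (1,2)(3,4)⋯(n-1,n)`. -/
def theta (n : ℕ) (hn : n % 2 = 0) : Equiv.Perm (Fin n) :=
  Function.Involutive.toPerm (thetaFun n hn) (by
    intro i
    have hi := i.isLt
    apply Fin.ext
    simp only [thetaFun]
    split_ifs <;> omega)

/-- One step of the partial Hecke action: `heckeStep a z = some (z · s_{a+1})` when defined,
with `a` a 0-indexed letter (so `a` corresponds to the simple transposition of `a+1, a+2`
in 1-indexed notation). -/
def heckeStep {n : ℕ} (a : ℕ) (z : Equiv.Perm (Fin n)) : Option (Equiv.Perm (Fin n)) :=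
  if h : a + 1 < n then
    let i : Fin n := ⟨a, Nat.lt_of_succ_lt h⟩
    let j : Fin n := ⟨a + 1, h⟩
    if z i < z j then some (Equiv.swap i j * z * Equiv.swap i j)
    else if z i = j ∧ z j = i then none
    else if z i ≠ j ∧ z j ≠ i ∧ z j < z i then some z
    else none
  else none

/-- Apply a word of (0-indexed) letters to `z` via the partial Hecke action. -/
def heckeApply {n : ℕ} (l : List ℕ) (z : Equiv.Perm (Fin n)) :
    Option (Equiv.Perm (Fin n)) :=
  l.foldl (fun o a => o.bind (heckeStep a)) (some z)

/-- The simple transposition corresponding to the 0-indexed letter `a`. -/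
def swapAt (n : ℕ) (a : ℕ) : Equiv.Perm (Fin n) :=
  if h : a + 1 < n then Equiv.swap ⟨a, Nat.lt_of_succ_lt h⟩ ⟨a + 1, h⟩ else 1

/-- The permutation `s_{i_1} s_{i_2} ⋯ s_{i_l}` of a word. -/
def wordToPerm (n : ℕ) (l : List ℕ) : Equiv.Perm (Fin n) := (l.map (swapAt n)).prod

/-- `l` is a reduced word for `w`. -/
def IsReducedWord (n : ℕ) (w : Equiv.Perm (Fin n)) (l : List ℕ) : Prop :=
  (∀ a ∈ l, a + 1 < n) ∧ wordToPerm n l = w ∧ l.length = invLen w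

/-- The set of Hecke atoms `B_fpf(z)`. -/
def Bfpf (n : ℕ) (hn : n % 2 = 0) (z : Equiv.Perm (Fin n)) :
    Finset (Equiv.Perm (Fin n)) :=
  @Finset.filter _
    (fun w => ∃ l : List ℕ, IsReducedWord n w l ∧ heckeApply l (theta n hn) = some z)
    (Classical.decPred _) Finset.univ

/-- `extPerm z w` is the permutation `z × w` acting on the first `m` letters by `z`
and the last `n` letters by `w`. -/
def extPerm {m n : ℕ} (z : Equiv.Perm (Fin m)) (w : Equiv.Perm (Fin n)) :
    Equiv.Perm (Fin (m + n)) :=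
  finSumFinEquiv.symm.trans ((Equiv.sumCongr z w).trans finSumFinEquiv)

/-- `rank(z_{[i][j]}) = #{k ∈ [j] : z(k) ≤ i}` (1-indexed sizes `i, j`). -/
def permRank {n : ℕ} (z : Equiv.Perm (Fin n)) (i j : ℕ) : ℕ :=
  (Finset.univ.filter (fun k : Fin n => (k : ℕ) < j ∧ ((z k : Fin n) : ℕ) < i)).card

/-- The rank of the upper-left `i × j` corner of `A` (1-indexed sizes `i, j ≤ n`). -/
def cornerRank {n : ℕ} (A : Matrix (Fin n) (Fin n) ℂ) (i j : ℕ) : ℕ :=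
  Matrix.rank (Matrix.of fun (a : Fin (min i n)) (b : Fin (min j n)) =>
    A ⟨(a : ℕ), lt_of_lt_of_le a.isLt (min_le_right i n)⟩
      ⟨(b : ℕ), lt_of_lt_of_le b.isLt (min_le_right j n)⟩)

/-- The orthogonal Rothe diagram `D^O(z) = {(i, z(j)) : z(i) > z(j) ≤ i < j}` (0-indexed). -/
def DO (n : ℕ) (z : Equiv.Perm (Fin n)) : Finset (Fin n × Fin n) :=
  Finset.image (fun p : Fin n × Fin n => (p.1, z p.2))
    (Finset.univ.filter (fun p : Fin n × Fin n => z p.2 < z p.1 ∧ z p.2 ≤ p.1 ∧ p.1 < p.2))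

/-- The symplectic Rothe diagram `D^Sp(z) = {(i, z(j)) : z(i) > z(j) < i < j}` (0-indexed). -/
def DSp (n : ℕ) (z : Equiv.Perm (Fin n)) : Finset (Fin n × Fin n) :=
  Finset.image (fun p : Fin n × Fin n => (p.1, z p.2))
    (Finset.univ.filter (fun p : Fin n × Fin n => z p.2 < z p.1 ∧ z p.2 < p.1 ∧ p.1 < p.2))

/-- The essential set `Ess(D) = {(i,j) ∈ D : (i,j+1) ∉ D and (i+1,j) ∉ D}`. -/
def Ess {n : ℕ} (D : Finset (Fin n × Fin n)) : Finset (Fin n × Fin n) :=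
  D.filter (fun p =>
    (∀ q ∈ D, ¬(q.1 = p.1 ∧ (q.2 : ℕ) = (p.2 : ℕ) + 1)) ∧
    (∀ q ∈ D, ¬((q.1 : ℕ) = (p.1 : ℕ) + 1 ∧ q.2 = p.2)))

/-- A permutation is vexillary if it avoids the pattern 2143. -/
def Vexillary {n : ℕ} (z : Equiv.Perm (Fin n)) : Prop :=
  ¬ ∃ i j k l : Fin n, i < j ∧ j < k ∧ k < l ∧ z j < z i ∧ z i < z l ∧ z l < z k

/-- The ideal of `ℤ[x_1,…,x_N]` generated by symmetric polynomials with zero constant term. -/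
def ILambda (N : ℕ) : Ideal (MvPolynomial (Fin N) ℤ) :=
  Ideal.span {f : MvPolynomial (Fin N) ℤ |
    (∀ σ : Equiv.Perm (Fin N), rename (⇑σ) f = f) ∧ coeff 0 f = 0}

/-- Substitute `x_j = 0` for all `j > n`, producing a polynomial in `x_1,…,x_n`. -/
def truncVars (n N : ℕ) (f : MvPolynomial (Fin N) Rb) : MvPolynomial (Fin n) Rb :=
  aeval (fun i : Fin N => if h : (i : ℕ) < n then X ⟨(i : ℕ), h⟩ else 0) f

/-- The order used to list the elements of a pipe-dream subset `S`:
rows weakly increasing, columns strictly decreasing within a row. -/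
def rowOrder {n : ℕ} (p q : Fin n × Fin n) : Prop :=
  p.1 < q.1 ∨ (p.1 = q.1 ∧ q.2 < p.2)

/-- `δ(S)` is a symplectic Hecke word for `z` (with Hecke words computed from `Θ`);
here `L` is the listing of `S` in the order `rowOrder`, and `(a,b) ∈ S` (0-indexed)
contributes the 0-indexed letter `a + b`, i.e. the 1-indexed letter `(b+1)+(a+1)-1`. -/
def DeltaHeckeWord (n : ℕ) (hn : n % 2 = 0) (z : Equiv.Perm (Fin n))
    (S : Finset (Fin n × Fin n)) : Prop :=
  ∃ L : List (Fin n × Fin n), L.toFinset = S ∧ L.Chain' rowOrder ∧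
    heckeApply (L.map (fun p => (p.1 : ℕ) + (p.2 : ℕ))) (theta n hn) = some z


section auxlemmas
variable {n : ℕ}

lemma zz_apply (z : Equiv.Perm (Fin n)) (hz : z * z = 1) (a : Fin n) : z (z a) = a := by
  have : (z * z) a = (1 : Equiv.Perm (Fin n)) a := by rw [hz]
  simpa [Equiv.Perm.mul_apply] using this

lemma invLen_inv (w : Equiv.Perm (Fin n)) : invLen w⁻¹ = invLen w := by
  unfold invLen
  apply Finset.card_nbij' (fun p => (w⁻¹ p.2, w⁻¹ p.1)) (fun p => (w p.2, w p.1))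
  · intro p hp
    simp only [Finset.mem_coe, Finset.mem_filter, Finset.mem_univ, true_and] at hp ⊢
    simpa using hp.symm
  · intro p hp
    simp only [Finset.mem_coe, Finset.mem_filter, Finset.mem_univ, true_and] at hp ⊢
    simpa using hp.symm
  · intro p hp; simp
  · intro p hp; simp

lemma swap_val (i j a : Fin n) (hij : (j : ℕ) = (i : ℕ) + 1) :
    ((Equiv.swap i j a : Fin n) : ℕ) =
      if (a : ℕ) = (i : ℕ) then (i : ℕ) + 1
      else if (a : ℕ) = (i : ℕ) + 1 then (i : ℕ) else (a : ℕ) := by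
  rcases eq_or_ne a i with rfl | h1
  · simp [Equiv.swap_apply_left, hij]
  · rcases eq_or_ne a j with rfl | h2
    · have : (a : ℕ) ≠ (i : ℕ) := fun h => h1 (Fin.ext h)
      simp [Equiv.swap_apply_right, this, hij]
    · have h1' : (a : ℕ) ≠ (i : ℕ) := fun h => h1 (Fin.ext h)
      have h2' : (a : ℕ) ≠ (i : ℕ) + 1 := fun h => h2 (Fin.ext (by omega))
      simp [Equiv.swap_apply_of_ne_of_ne h1 h2, h1', h2']

lemma adj_swap_lt {i j : Fin n} (hij : (j : ℕ) = (i : ℕ) + 1) {a b : Fin n}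
    (hab : a < b) (hne : (a, b) ≠ (i, j)) :
    Equiv.swap i j a < Equiv.swap i j b := by
  have hne' : ¬((a : ℕ) = (i : ℕ) ∧ (b : ℕ) = (i : ℕ) + 1) := by
    intro ⟨h1, h2⟩
    exact hne (Prod.ext_iff.mpr ⟨Fin.ext h1, Fin.ext (show (b : ℕ) = (j : ℕ) by omega)⟩)
  have hab' : (a : ℕ) < (b : ℕ) := hab
  rw [Fin.lt_def, swap_val i j a hij, swap_val i j b hij]
  have hb := b.isLt
  split_ifs <;> omega

lemma invLen_mul_swap (w : Equiv.Perm (Fin n)) (i j : Fin n) (hij : (j : ℕ) = (i : ℕ) + 1)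
    (h : w i < w j) : invLen (w * Equiv.swap i j) = invLen w + 1 := by
  classical
  have hilt : i < j := by rw [Fin.lt_def]; omega
  unfold invLen
  set s := Equiv.swap i j with hs
  have hmem : (i, j) ∈ Finset.univ.filter
      (fun p : Fin n × Fin n => p.1 < p.2 ∧ (w * s) p.2 < (w * s) p.1) := by
    rw [Finset.mem_filter]
    simp only [Finset.mem_univ, true_and, Equiv.Perm.mul_apply]
    rw [hs, Equiv.swap_apply_left, Equiv.swap_apply_right]
    exact ⟨hilt, h⟩
  rw [← Finset.card_erase_add_one hmem]
  congr 1
  apply Finset.card_nbij' (fun p => (s p.1, s p.2)) (fun p => (s p.1, s p.2))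
  · intro p hp
    rw [Finset.mem_coe, Finset.mem_erase, Finset.mem_filter] at hp
    simp only [Finset.mem_univ, true_and,
      Equiv.Perm.mul_apply] at hp
    obtain ⟨hpne, hp1, hp2⟩ := hp
    simp only [Finset.mem_coe, Finset.mem_filter, Finset.mem_univ, true_and]
    refine ⟨adj_swap_lt hij hp1 ?_, hp2⟩
    intro hc; exact hpne (by rw [Prod.ext_iff] at hc ⊢; exact hc)
  · intro p hp
    simp only [Finset.mem_coe, Finset.mem_filter, Finset.mem_univ, true_and] at hp
    obtain ⟨hp1, hp2⟩ := hp
    have hpne : (p.1, p.2) ≠ (i, j) := by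
      intro hc
      rw [Prod.ext_iff] at hc
      rw [hc.1, hc.2] at hp2
      exact absurd hp2 (not_lt.mpr (le_of_lt h))
    rw [Finset.mem_coe, Finset.mem_erase, Finset.mem_filter]
    simp only [Finset.mem_univ, true_and,
      Equiv.Perm.mul_apply]
    refine ⟨?_, adj_swap_lt hij hp1 hpne, ?_⟩
    · intro hc
      rw [Prod.ext_iff] at hc
      simp only at hc
      have h1 : p.1 = s i := by rw [← hc.1, hs, Equiv.swap_apply_self]
      have h2 : p.2 = s j := by rw [← hc.2, hs, Equiv.swap_apply_self]
      rw [hs, Equiv.swap_apply_left] at h1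
      rw [hs, Equiv.swap_apply_right] at h2
      rw [h1, h2] at hp1
      exact absurd hp1 (not_lt.mpr (le_of_lt hilt))
    · rw [hs, Equiv.swap_apply_self, Equiv.swap_apply_self]
      exact hp2
  · intro p hp; simp [hs, Equiv.swap_apply_self]
  · intro p hp; simp [hs, Equiv.swap_apply_self]

lemma invLen_mul_swap' (w : Equiv.Perm (Fin n)) (i j : Fin n) (hij : (j : ℕ) = (i : ℕ) + 1)
    (h : w j < w i) : invLen (w * Equiv.swap i j) + 1 = invLen w := by
  have h2 : (w * Equiv.swap i j) i < (w * Equiv.swap i j) j := by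
    simp only [Equiv.Perm.mul_apply, Equiv.swap_apply_left, Equiv.swap_apply_right]
    exact h
  have := invLen_mul_swap (w * Equiv.swap i j) i j hij h2
  rw [mul_assoc, Equiv.swap_mul_self, mul_one] at this
  omega

lemma two_invLen (z : Equiv.Perm (Fin n)) (hz : IsFPF z) :
    2 * invLen z = 4 * fpfLen z + n := by
  classical
  obtain ⟨hzi, hzf⟩ := hz
  have hzz := zz_apply z hzi
  set B := Finset.univ.filter
    (fun p : Fin n × Fin n => (p.1 < p.2 ∧ z p.2 < z p.1) ∧ z p.2 < p.1) with hB
  set C := Finset.univ.filter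
    (fun p : Fin n × Fin n => (p.1 < p.2 ∧ z p.2 < z p.1) ∧ p.1 < z p.2) with hC
  set F := Finset.univ.filter
    (fun p : Fin n × Fin n => (p.1 < p.2 ∧ z p.2 < z p.1) ∧ z p.2 = p.1) with hF
  set G := Finset.univ.filter (fun a : Fin n => a < z a) with hG
  have hfpf : fpfLen z = B.card := by
    unfold fpfLen
    rw [hB]
    congr 1
    apply Finset.filter_congr
    intro p _
    simp only [Fin.lt_def]
    omega
  have hsplit : invLen z = B.card + (C.card + F.card) := by
    have e1 := (Finset.card_filter_add_card_filter_not
      (s := Finset.univ.filter (fun p : Fin n × Fin n => p.1 < p.2 ∧ z p.2 < z p.1))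
      (p := fun p : Fin n × Fin n => z p.2 < p.1)).symm
    rw [Finset.filter_filter, Finset.filter_filter] at e1
    have e2 := (Finset.card_filter_add_card_filter_not
      (s := Finset.univ.filter
        (fun p : Fin n × Fin n => (p.1 < p.2 ∧ z p.2 < z p.1) ∧ ¬ z p.2 < p.1))
      (p := fun p : Fin n × Fin n => p.1 < z p.2)).symm
    rw [Finset.filter_filter, Finset.filter_filter] at e2
    have eC : Finset.univ.filter
        (fun p : Fin n × Fin n => ((p.1 < p.2 ∧ z p.2 < z p.1) ∧ ¬ z p.2 < p.1) ∧ p.1 < z p.2)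
        = C := by
      rw [hC]
      apply Finset.filter_congr
      intro p _
      simp only [Fin.lt_def]
      omega
    have eF : Finset.univ.filter
        (fun p : Fin n × Fin n => ((p.1 < p.2 ∧ z p.2 < z p.1) ∧ ¬ z p.2 < p.1) ∧ ¬ p.1 < z p.2)
        = F := by
      rw [hF]
      apply Finset.filter_congr
      intro p _
      simp only [Fin.lt_def, Fin.ext_iff]
      omega
    rw [eC, eF] at e2
    unfold invLen
    rw [e1, e2, hB]
  have hCB : C.card = B.card := by
    rw [hB, hC]
    apply Finset.card_nbij' (fun p => (z p.2, z p.1)) (fun p => (z p.2, z p.1))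
    · intro p hp
      simp only [Finset.mem_coe, Finset.mem_filter, Finset.mem_univ, true_and] at hp ⊢
      rw [hzz, hzz]
      exact ⟨⟨hp.1.2, hp.1.1⟩, hp.2⟩
    · intro p hp
      simp only [Finset.mem_coe, Finset.mem_filter, Finset.mem_univ, true_and] at hp ⊢
      rw [hzz, hzz]
      exact ⟨⟨hp.1.2, hp.1.1⟩, hp.2⟩
    · intro p hp; simp [hzz]
    · intro p hp; simp [hzz]
  have hFG : F.card = G.card := by
    rw [hF, hG]
    apply Finset.card_nbij' (fun p => p.1) (fun a => (a, z a))
    · intro p hp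
      simp only [Finset.mem_coe, Finset.mem_filter, Finset.mem_univ, true_and] at hp ⊢
      obtain ⟨⟨h1, _⟩, h3⟩ := hp
      have : p.2 = z p.1 := by rw [← h3, hzz]
      rw [← this]; exact h1
    · intro a ha
      simp only [Finset.mem_coe, Finset.mem_filter, Finset.mem_univ, true_and] at ha ⊢
      exact ⟨⟨ha, by rw [hzz]; exact ha⟩, by rw [hzz]⟩
    · intro p hp
      simp only [Finset.mem_coe, Finset.mem_filter, Finset.mem_univ, true_and] at hp
      have : p.2 = z p.1 := by rw [← hp.2, hzz]
      exact Prod.ext rfl this.symm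
    · intro a ha; rfl
  have hGn : 2 * G.card = n := by
    have hpart : G.card + (Finset.univ.filter (fun a : Fin n => ¬ a < z a)).card = n := by
      rw [hG, Finset.card_filter_add_card_filter_not]
      simp
    have hGG : (Finset.univ.filter (fun a : Fin n => ¬ a < z a)).card = G.card := by
      rw [hG]
      apply Finset.card_nbij' (fun a => z a) (fun a => z a)
      · intro a ha
        simp only [Finset.mem_coe, Finset.mem_filter, Finset.mem_univ, true_and] at ha ⊢
        rw [hzz]
        rcases lt_or_ge a (z a) with h | h
        · exact absurd h ha
        · exact lt_of_le_of_ne h (hzf a)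
      · intro a ha
        simp only [Finset.mem_coe, Finset.mem_filter, Finset.mem_univ, true_and] at ha ⊢
        rw [hzz]
        exact not_lt.mpr (le_of_lt ha)
      · intro a _; simp [hzz]
      · intro a _; simp [hzz]
    omega
  omega

end auxlemmas

section mainlemmas
variable {n : ℕ}

lemma invLen_swap_mul (w : Equiv.Perm (Fin n)) (i j : Fin n) (hij : (j : ℕ) = (i : ℕ) + 1)
    (h : w⁻¹ i < w⁻¹ j) : invLen (Equiv.swap i j * w) = invLen w + 1 := by
  rw [← invLen_inv (Equiv.swap i j * w), mul_inv_rev, Equiv.swap_inv,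
      invLen_mul_swap w⁻¹ i j hij h, invLen_inv]

lemma invLen_swap_mul' (w : Equiv.Perm (Fin n)) (i j : Fin n) (hij : (j : ℕ) = (i : ℕ) + 1)
    (h : w⁻¹ j < w⁻¹ i) : invLen (Equiv.swap i j * w) + 1 = invLen w := by
  rw [← invLen_inv (Equiv.swap i j * w), mul_inv_rev, Equiv.swap_inv,
      invLen_mul_swap' w⁻¹ i j hij h, invLen_inv]

end mainlemmas

theorem statement16 (n : ℕ) (hpos : 0 < n) (hev : n % 2 = 0)
    (z : Equiv.Perm (Fin n)) (hz : IsFPF z)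
    (i j : Fin n) (hij : (j : ℕ) = (i : ℕ) + 1) :
    (z i < z j → fpfLen (Equiv.swap i j * z * Equiv.swap i j) = fpfLen z + 1) ∧
    (z i = j → z j = i → fpfLen (Equiv.swap i j * z * Equiv.swap i j) = fpfLen z) ∧
    (z i ≠ j → z j ≠ i → z j < z i →
      fpfLen (Equiv.swap i j * z * Equiv.swap i j) + 1 = fpfLen z) := by
  obtain ⟨hzi, hzf⟩ := hz
  have hzz := zz_apply z hzi
  have hiltj : i < j := by rw [Fin.lt_def]; omega
  have hzinv : z⁻¹ = z := inv_eq_of_mul_eq_one_right hzi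
  have hkey : (z * Equiv.swap i j)⁻¹ = Equiv.swap i j * z := by
    rw [mul_inv_rev, Equiv.swap_inv, hzinv]
  have hfpf' : IsFPF (Equiv.swap i j * z * Equiv.swap i j) := by
    constructor
    · ext a
      simp [Equiv.Perm.mul_apply, Equiv.swap_apply_self, hzz]
    · intro a hca
      simp only [Equiv.Perm.mul_apply] at hca
      have h2 : z (Equiv.swap i j a) = Equiv.swap i j a := by
        have h3 := congrArg (Equiv.swap i j) hca
        rwa [Equiv.swap_apply_self] at h3
      exact hzf _ h2
  refine ⟨?_, ?_, ?_⟩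
  · -- increasing case
    intro h
    have hzij : z i ≠ j := by
      intro hc
      have h2 : z j = i := by rw [← hc, hzz]
      rw [hc, h2] at h
      exact absurd h (not_lt.mpr (le_of_lt hiltj))
    have hzji : z j ≠ i := by
      intro hc
      have h2 : z i = j := by rw [← hc, hzz]
      rw [hc, h2] at h
      exact absurd h (not_lt.mpr (le_of_lt hiltj))
    have s1 : invLen (z * Equiv.swap i j) = invLen z + 1 := invLen_mul_swap z i j hij h
    have s2 : invLen (Equiv.swap i j * (z * Equiv.swap i j))
        = invLen (z * Equiv.swap i j) + 1 := by
      apply invLen_swap_mul _ i j hij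
      rw [hkey]
      simp only [Equiv.Perm.mul_apply]
      rw [Equiv.swap_apply_of_ne_of_ne (hzf i) hzij,
        Equiv.swap_apply_of_ne_of_ne hzji (hzf j)]
      exact h
    have t1 := two_invLen z ⟨hzi, hzf⟩
    have t2 := two_invLen _ hfpf'
    rw [← mul_assoc] at s2
    omega
  · -- equal case
    intro h1 h2
    have heq : Equiv.swap i j * z * Equiv.swap i j = z := by
      apply Equiv.ext
      intro a
      simp only [Equiv.Perm.mul_apply]
      rcases eq_or_ne a i with rfl | ha1
      · simp [Equiv.swap_apply_left, Equiv.swap_apply_right, h1, h2]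
      · rcases eq_or_ne a j with rfl | ha2
        · simp [Equiv.swap_apply_left, Equiv.swap_apply_right, h1, h2]
        · have hz1 : z a ≠ i := by
            intro hc
            have : a = z i := by rw [← hc, hzz]
            rw [h1] at this
            exact ha2 this
          have hz2 : z a ≠ j := by
            intro hc
            have : a = z j := by rw [← hc, hzz]
            rw [h2] at this
            exact ha1 this
          rw [Equiv.swap_apply_of_ne_of_ne ha1 ha2, Equiv.swap_apply_of_ne_of_ne hz1 hz2]
    rw [heq]
  · -- decreasing case
    intro hzij hzji h
    have s1 : invLen (z * Equiv.swap i j) + 1 = invLen z := invLen_mul_swap' z i j hij h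
    have s2 : invLen (Equiv.swap i j * (z * Equiv.swap i j)) + 1
        = invLen (z * Equiv.swap i j) := by
      apply invLen_swap_mul' _ i j hij
      rw [hkey]
      simp only [Equiv.Perm.mul_apply]
      rw [Equiv.swap_apply_of_ne_of_ne (hzf i) hzij,
        Equiv.swap_apply_of_ne_of_ne hzji (hzf j)]
      exact h
    have t1 := two_invLen z ⟨hzi, hzf⟩
    have t2 := two_invLen _ hfpf'
    rw [← mul_assoc] at s2
    omega

end
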